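/- Let (Ω, P) be a probability space, x : Ω → ℂ^N a random measurement, and L : ℂ^N × ℝ → ℝ an objective function such that for every measurement value the map θ ↦ L(x, θ) has a unique maximizer θ̂(x), is symmetric around θ̂(x), strictly increasing below it and strictly decreasing above it. Then for any fixed θ ∈ ℝ, E[(θ̂(x) - θ)²] = 2 ∫_{-∞}^{∞} |ε| · P(L(x, θ + 2ε) ≥ L(x, θ)) dε, provided θ̂(x) - θ has finite second moment. -/

import Mathlib

open MeasureTheory

/-- Auxiliary: the lintegral of `|ε|` over `uIcc 0 c` is `c²/2`. -/
lemma lint_abs_uIcc (c : ℝ) :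
    ∫⁻ ε in Set.uIcc (0:ℝ) c, ENNReal.ofReal |ε| = ENNReal.ofReal (c ^ 2 / 2) := by
  rcases le_total 0 c with h | h
  · rw [Set.uIcc_of_le h]
    have h1 : ∫⁻ ε in Set.Icc (0:ℝ) c, ENNReal.ofReal |ε|
        = ∫⁻ ε in Set.Icc (0:ℝ) c, ENNReal.ofReal ε := by
      refine setLIntegral_congr_fun measurableSet_Icc ?_
      intro ε hε
      simp only [abs_of_nonneg hε.1]
    rw [h1, ← ofReal_integral_eq_lintegral_ofReal
        (continuous_id'.integrableOn_Icc)
        (ae_restrict_of_forall_mem measurableSet_Icc ?_)]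
    · congr 1
      rw [integral_Icc_eq_integral_Ioc, ← intervalIntegral.integral_of_le h, integral_id]
      ring
    · intro ε hε
      exact hε.1
  · rw [Set.uIcc_of_ge h]
    have h1 : ∫⁻ ε in Set.Icc c (0:ℝ), ENNReal.ofReal |ε|
        = ∫⁻ ε in Set.Icc c (0:ℝ), ENNReal.ofReal (-ε) := by
      refine setLIntegral_congr_fun measurableSet_Icc ?_
      intro ε hε
      simp only [abs_of_nonpos hε.2]
    rw [h1, ← ofReal_integral_eq_lintegral_ofReal
        ((continuous_neg).integrableOn_Icc)
        (ae_restrict_of_forall_mem measurableSet_Icc ?_)]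
    · congr 1
      rw [integral_Icc_eq_integral_Ioc, ← intervalIntegral.integral_of_le h]
      have : (∫ x in c..(0:ℝ), -x) = -((0:ℝ) ^ 2 - c ^ 2) / 2 := by
        rw [intervalIntegral.integral_neg, integral_id]; ring
      rw [this]; ring
    · intro ε hε
      exact neg_nonneg.2 hε.2

/-- For an implicitly defined estimator `θhat (x ω)` whose objective function
`L (x ω) ·` has, for every measurement value, a unique maximizer around which it is
symmetric, strictly increasing below and strictly decreasing above, the MSE at any fixed
`θ` equals `2 ∫ |ε| P(L(x, θ+2ε) ≥ L(x, θ)) dε`, provided finite second moment. -/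
theorem stmt_4 {Ω : Type*} [MeasurableSpace Ω] (μ : Measure Ω) [IsProbabilityMeasure μ]
    (N : ℕ) (x : Ω → (Fin N → ℂ)) (hx : Measurable x)
    (L : (Fin N → ℂ) → ℝ → ℝ) (θhat : (Fin N → ℂ) → ℝ)
    (hmax : ∀ m t, t ≠ θhat m → L m t < L m (θhat m))
    (hsym : ∀ m (h : ℝ), L m (θhat m + h) = L m (θhat m - h))
    (hinc : ∀ m, StrictMonoOn (L m) (Set.Iic (θhat m)))
    (hdec : ∀ m, StrictAntiOn (L m) (Set.Ici (θhat m)))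
    (θ : ℝ) (hL2 : MemLp (fun ω => θhat (x ω) - θ) 2 μ) :
    ∫ ω, (θhat (x ω) - θ) ^ 2 ∂μ
      = 2 * ∫ ε : ℝ, |ε| * (μ {ω | L (x ω) θ ≤ L (x ω) (θ + 2 * ε)}).toReal := by
  classical
  set d : Ω → ℝ := fun ω => θhat (x ω) - θ with hd
  -- Step A: L m t depends only on |t - θhat m|, strictly decreasing in it
  have rep : ∀ m t, L m t = L m (θhat m + |t - θhat m|) := by
    intro m t
    rcases le_total (θhat m) t with h | h
    · rw [abs_of_nonneg (by linarith)]
      congr 1; ring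
    · rw [abs_of_nonpos (by linarith)]
      have e : θhat m + -(t - θhat m) = θhat m + (θhat m - t) := by ring
      rw [e, hsym m (θhat m - t)]
      congr 1; ring
  have key : ∀ m a b, L m a ≤ L m b ↔ |b - θhat m| ≤ |a - θhat m| := by
    intro m a b
    rw [rep m a, rep m b,
      (hdec m).le_iff_ge (Set.mem_Ici.mpr (le_add_of_nonneg_right (abs_nonneg _)))
        (Set.mem_Ici.mpr (le_add_of_nonneg_right (abs_nonneg _)))]
    exact add_le_add_iff_left _
  -- Step B: event characterization
  have hB : ∀ m ε, (L m θ ≤ L m (θ + 2 * ε)) ↔ ε ∈ Set.uIcc 0 (θhat m - θ) := by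
    intro m ε
    rw [key, Set.mem_uIcc, abs_le]
    rcases le_total θ (θhat m) with h | h
    · rw [abs_of_nonpos (by linarith : θ - θhat m ≤ 0)]
      constructor
      · rintro ⟨h1, h2⟩; left; constructor <;> linarith
      · rintro (⟨h1, h2⟩ | ⟨h1, h2⟩) <;> constructor <;> linarith
    · rw [abs_of_nonneg (by linarith : 0 ≤ θ - θhat m)]
      constructor
      · rintro ⟨h1, h2⟩; right; constructor <;> linarith
      · rintro (⟨h1, h2⟩ | ⟨h1, h2⟩) <;> constructor <;> linarith
  have hset : ∀ ε : ℝ, {ω | L (x ω) θ ≤ L (x ω) (θ + 2 * ε)}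
      = {ω | ε ∈ Set.uIcc 0 (d ω)} := by
    intro ε; ext ω; exact hB (x ω) ε
  -- measurable modification of d
  obtain ⟨d', hd'sm, hdd'⟩ := hL2.aestronglyMeasurable
  have hd'm : Measurable d' := hd'sm.measurable
  have hμset : ∀ ε : ℝ, μ {ω | L (x ω) θ ≤ L (x ω) (θ + 2 * ε)}
      = μ {ω | ε ∈ Set.uIcc 0 (d' ω)} := by
    intro ε
    rw [hset ε]
    apply measure_congr
    rw [Filter.eventuallyEq_set]
    filter_upwards [hdd'] with ω hω
    rw [show d ω = d' ω from hω]
  -- product set and function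
  set T : Set (Ω × ℝ) := {p | p.2 ∈ Set.uIcc 0 (d' p.1)} with hT
  have hTm : MeasurableSet T := by
    have : T = {p : Ω × ℝ | min 0 (d' p.1) ≤ p.2} ∩ {p | p.2 ≤ max 0 (d' p.1)} := by
      ext p
      simp [hT, Set.uIcc, Set.mem_Icc]
    rw [this]
    exact (measurableSet_le (measurable_const.min (hd'm.comp measurable_fst)) measurable_snd).inter
      (measurableSet_le measurable_snd (measurable_const.max (hd'm.comp measurable_fst)))
  set F : Ω → ℝ → ENNReal := fun ω ε => ENNReal.ofReal |ε| * T.indicator 1 (ω, ε) with hF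
  have hFm : Measurable (Function.uncurry F) := by
    apply Measurable.mul
    · exact ENNReal.measurable_ofReal.comp (measurable_snd.abs)
    · exact (measurable_one.indicator hTm)
  -- inner integral over ω
  have hslice : ∀ ε : ℝ, MeasurableSet {ω | (ω, ε) ∈ T} :=
    fun ε => hTm.preimage (measurable_id.prodMk measurable_const)
  have hGω : ∀ ε : ℝ, ∫⁻ ω, F ω ε ∂μ
      = ENNReal.ofReal |ε| * μ {ω | ε ∈ Set.uIcc 0 (d' ω)} := by
    intro ε
    have hpt : ∀ ω, F ω ε = ENNReal.ofReal |ε| * ({ω | (ω, ε) ∈ T}.indicator 1 ω) := by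
      intro ω
      by_cases h : (ω, ε) ∈ T
      · simp [hF, Set.indicator_of_mem h,
          Set.indicator_of_mem (show ω ∈ {ω | (ω, ε) ∈ T} from h)]
      · simp [hF, Set.indicator_of_notMem h,
          Set.indicator_of_notMem (show ω ∉ {ω | (ω, ε) ∈ T} from h)]
    simp only [hpt]
    rw [lintegral_const_mul _ (measurable_one.indicator (hslice ε)),
      lintegral_indicator_one (hslice ε)]
    rfl
  -- inner integral over ε
  have hGε : ∀ ω : Ω, ∫⁻ ε : ℝ, F ω ε = ENNReal.ofReal (d' ω ^ 2 / 2) := by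
    intro ω
    have : ∀ ε : ℝ, F ω ε = (Set.uIcc 0 (d' ω)).indicator (fun e => ENNReal.ofReal |e|) ε := by
      intro ε
      simp only [hF, Set.indicator_apply]
      by_cases h : ε ∈ Set.uIcc 0 (d' ω)
      · simp [h, show (ω, ε) ∈ T from h]
      · simp [h, show (ω, ε) ∉ T from h]
    simp only [this]
    rw [lintegral_indicator measurableSet_uIcc]
    exact lint_abs_uIcc (d' ω)
  -- integrability facts
  have hint : Integrable (fun ω => d ω ^ 2) μ := hL2.integrable_sq
  have hint' : Integrable (fun ω => d' ω ^ 2) μ :=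
    hint.congr (hdd'.mono fun ω h => by simp only []; rw [h])
  have hhalf : Integrable (fun ω => d' ω ^ 2 / 2) μ := hint'.div_const 2
  have hR : ∫⁻ ω, ENNReal.ofReal (d' ω ^ 2 / 2) ∂μ
      = ENNReal.ofReal (∫ ω, d' ω ^ 2 / 2 ∂μ) := by
    rw [ofReal_integral_eq_lintegral_ofReal hhalf
      (Filter.Eventually.of_forall fun ω => by positivity)]
  have hRne : ∫⁻ ω, ENNReal.ofReal (d' ω ^ 2 / 2) ∂μ ≠ ⊤ := by
    rw [hR]; exact ENNReal.ofReal_ne_top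
  -- Tonelli swap
  have hswap : (∫⁻ ε : ℝ, ∫⁻ ω, F ω ε ∂μ) = ∫⁻ ω, (∫⁻ ε : ℝ, F ω ε) ∂μ :=
    (lintegral_lintegral_swap hFm.aemeasurable).symm
  have hεint : (∫⁻ ε : ℝ, ∫⁻ ω, F ω ε ∂μ) = ∫⁻ ω, ENNReal.ofReal (d' ω ^ 2 / 2) ∂μ := by
    rw [hswap]
    exact lintegral_congr hGε
  -- convert RHS integral
  have hGmeas : Measurable fun ε : ℝ => ∫⁻ ω, F ω ε ∂μ :=
    Measurable.lintegral_prod_left hFm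
  have hRHS : ∫ ε : ℝ, |ε| * (μ {ω | L (x ω) θ ≤ L (x ω) (θ + 2 * ε)}).toReal
      = (∫⁻ ω, ENNReal.ofReal (d' ω ^ 2 / 2) ∂μ).toReal := by
    have heq : ∀ ε : ℝ, |ε| * (μ {ω | L (x ω) θ ≤ L (x ω) (θ + 2 * ε)}).toReal
        = ((∫⁻ ω, F ω ε ∂μ)).toReal := by
      intro ε
      rw [hGω ε, hμset ε, ENNReal.toReal_mul, ENNReal.toReal_ofReal (abs_nonneg _)]
    simp only [heq]
    rw [integral_toReal hGmeas.aemeasurable]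
    · rw [hεint]
    · refine ae_lt_top hGmeas ?_
      rw [hεint]; exact hRne
  rw [hRHS]
  -- LHS
  have hLHS : ∫ ω, (θhat (x ω) - θ) ^ 2 ∂μ = ∫ ω, d' ω ^ 2 ∂μ := by
    refine integral_congr_ae (hdd'.mono fun ω h => ?_)
    simp only []
    rw [← h]
  rw [hLHS, hR, ENNReal.toReal_ofReal (integral_nonneg fun ω => by positivity)]
  rw [show (∫ ω, d' ω ^ 2 / 2 ∂μ) = (∫ ω, d' ω ^ 2 ∂μ) / 2 from integral_div 2 _]
  ring
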